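/- Let λ₁, λ₂ be nonzero real numbers and F₂ a real number. Then the identity λ₁·((1 − λ₂F₂²)·x + (λ₂ + 1)·F₂) = x·(−(λ₂ + 1)·F₂·x + λ₂ − F₂²) holds for every real number x if and only if either (F₂ = 0 and λ₁ = λ₂) or (F₂ ≠ 0 and λ₁ = λ₂ = −1). -/
import Mathlib


/-- Involutive coupling criterion: the cross-multiplied identity equating the two
involutions holds for every `x` iff `F₂ = 0 ∧ λ₁ = λ₂` or `F₂ ≠ 0 ∧ λ₁ = λ₂ = −1`. -/
theorem stmt_3 (lam₁ lam₂ F₂ : ℝ) (hlam₁ : lam₁ ≠ 0) (hlam₂ : lam₂ ≠ 0) :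
    (∀ x : ℝ, lam₁ * ((1 - lam₂ * F₂ ^ 2) * x + (lam₂ + 1) * F₂) =
      x * (-((lam₂ + 1) * F₂) * x + lam₂ - F₂ ^ 2)) ↔
    ((F₂ = 0 ∧ lam₁ = lam₂) ∨ (F₂ ≠ 0 ∧ lam₁ = -1 ∧ lam₂ = -1)) := by
  constructor
  · intro h
    by_cases hF : F₂ = 0
    · left
      refine ⟨hF, ?_⟩
      have h1 := h 1
      rw [hF] at h1
      nlinarith [h1]
    · right
      have h0 := h 0
      have hl2 : lam₂ = -1 := by
        have : lam₁ * ((lam₂ + 1) * F₂) = 0 := by linarith [h0]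
        rcases mul_eq_zero.mp this with h' | h'
        · exact absurd h' hlam₁
        · rcases mul_eq_zero.mp h' with h' | h'
          · linarith
          · exact absurd h' hF
      have h1 := h 1
      rw [hl2] at h1
      refine ⟨hF, ?_, hl2⟩
      have hpos : (1 : ℝ) + F₂ ^ 2 > 0 := by positivity
      nlinarith [h1]
  · rintro (⟨hF, hl⟩ | ⟨hF, hl1, hl2⟩) x <;> subst_vars <;> ring
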